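/- arXiv:2006.10185 — 8 statements merged into one kernel-verified Lean document; each statement's English description precedes it below -/
import Mathlib

section
/- Let Σ ∈ ℝ^{n×n} be a symmetric positive definite matrix, let μ, μ̂, x ∈ ℝ^n, let β ≥ 0 with ‖μ̂ − μ‖_Σ ≤ β, let α ≥ 1, and let c₀, τ ∈ ℝ. If c₀ + ⟨x, μ̂⟩ + α β ‖x‖_{Σ⁻¹} ≤ τ, then c₀ + ⟨x, μ⟩ ≤ τ. -/
open Matrix

lemma dot_sq_le (n : ℕ) (u w : Fin n → ℝ) :
    (u ⬝ᵥ w) ^ 2 ≤ (u ⬝ᵥ u) * (w ⬝ᵥ w) := by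
  simpa [dotProduct, pow_two] using
    Finset.sum_mul_sq_le_sq_mul_sq Finset.univ u w

lemma vecMul_of_symm (n : ℕ) (M : Matrix (Fin n) (Fin n) ℝ) (hM : Mᵀ = M)
    (a : Fin n → ℝ) : a ᵥ* M = M *ᵥ a := by
  conv_lhs => rw [← hM]
  exact vecMul_transpose M a

open scoped MatrixOrder in
lemma posDef_sqrt_aux (n : ℕ) (S : Matrix (Fin n) (Fin n) ℝ) (hS : S.PosDef) :
    CFC.sqrt S * CFC.sqrt S = S ∧ (CFC.sqrt S)ᵀ = CFC.sqrt S := by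
  have h0 : 0 ≤ S := hS.posSemidef.nonneg
  refine ⟨CFC.sqrt_mul_sqrt_self S h0, ?_⟩
  have := (CFC.sqrt_nonneg S).posSemidef.isHermitian
  simpa [IsHermitian, conjTranspose_eq_transpose_of_trivial] using this

/-- If `‖μ̂ - μ‖_Σ ≤ β`, `α ≥ 1`, and the pessimistic cost
`c₀ + ⟨x, μ̂⟩ + α β ‖x‖_{Σ⁻¹}` is at most `τ`, then the true cost `c₀ + ⟨x, μ⟩` is at most `τ`. -/
theorem stmt1 (n : ℕ) (S : Matrix (Fin n) (Fin n) ℝ) (hS : S.PosDef)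
    (μ μhat x : Fin n → ℝ) (β : ℝ) (hβ : 0 ≤ β)
    (hconf : Real.sqrt ((μhat - μ) ⬝ᵥ (S *ᵥ (μhat - μ))) ≤ β)
    (α : ℝ) (hα : 1 ≤ α) (c₀ τ : ℝ)
    (h : c₀ + x ⬝ᵥ μhat + α * β * Real.sqrt (x ⬝ᵥ (S⁻¹ *ᵥ x)) ≤ τ) :
    c₀ + x ⬝ᵥ μ ≤ τ := by
  set d := μhat - μ with hd
  obtain ⟨C, hCC, hCsym⟩ : ∃ C : Matrix (Fin n) (Fin n) ℝ, C * C = S ∧ Cᵀ = C :=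
    ⟨_, posDef_sqrt_aux n S hS⟩
  have hdet : IsUnit C.det := by
    have hne : C.det * C.det ≠ 0 := by
      rw [← det_mul, hCC]; exact ne_of_gt hS.det_pos
    exact isUnit_iff_ne_zero.mpr fun h0 => hne (by rw [h0, mul_zero])
  have hinv : C⁻¹ * C = 1 := nonsing_inv_mul C hdet
  have hCinvsym : (C⁻¹)ᵀ = C⁻¹ := by rw [transpose_nonsing_inv, hCsym]
  have hSinv : C⁻¹ * C⁻¹ = S⁻¹ := by rw [← hCC, Matrix.mul_inv_rev]
  set u := C⁻¹ *ᵥ x with hu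
  set w := C *ᵥ d with hw
  have huu : u ⬝ᵥ u = x ⬝ᵥ (S⁻¹ *ᵥ x) := by
    rw [hu, dotProduct_mulVec, vecMul_of_symm n C⁻¹ hCinvsym, mulVec_mulVec, hSinv,
      dotProduct_comm, dotProduct_mulVec, vecMul_of_symm n S⁻¹ (by rw [← hSinv]; rw [transpose_mul, hCinvsym])]
  have hww : w ⬝ᵥ w = d ⬝ᵥ (S *ᵥ d) := by
    rw [hw, dotProduct_mulVec, vecMul_of_symm n C hCsym, mulVec_mulVec, hCC,
      dotProduct_comm, dotProduct_mulVec, vecMul_of_symm n S hS.isHermitian]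
  have huw : u ⬝ᵥ w = x ⬝ᵥ d := by
    rw [hu, hw, dotProduct_mulVec, vecMul_of_symm n C hCsym, mulVec_mulVec,
      mul_nonsing_inv C hdet, one_mulVec]
  have hx0 : 0 ≤ x ⬝ᵥ (S⁻¹ *ᵥ x) := by
    rw [← huu]; exact Finset.sum_nonneg fun i _ => mul_self_nonneg (u i)
  have hd0 : 0 ≤ d ⬝ᵥ (S *ᵥ d) := by
    rw [← hww]; exact Finset.sum_nonneg fun i _ => mul_self_nonneg (w i)
  have key : |x ⬝ᵥ d| ≤ Real.sqrt (x ⬝ᵥ (S⁻¹ *ᵥ x)) * Real.sqrt (d ⬝ᵥ (S *ᵥ d)) := by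
    rw [← Real.sqrt_mul hx0, ← Real.sqrt_sq_eq_abs]
    apply Real.sqrt_le_sqrt
    calc (x ⬝ᵥ d) ^ 2 = (u ⬝ᵥ w) ^ 2 := by rw [huw]
      _ ≤ (u ⬝ᵥ u) * (w ⬝ᵥ w) := dot_sq_le n u w
      _ = (x ⬝ᵥ (S⁻¹ *ᵥ x)) * (d ⬝ᵥ (S *ᵥ d)) := by rw [huu, hww]
  have hs0 : 0 ≤ Real.sqrt (x ⬝ᵥ (S⁻¹ *ᵥ x)) := Real.sqrt_nonneg _
  have step : x ⬝ᵥ μ - x ⬝ᵥ μhat ≤ α * β * Real.sqrt (x ⬝ᵥ (S⁻¹ *ᵥ x)) := by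
    have h1 : x ⬝ᵥ μ - x ⬝ᵥ μhat = -(x ⬝ᵥ d) := by
      rw [hd, dotProduct_sub]; ring
    rw [h1]
    calc -(x ⬝ᵥ d) ≤ |x ⬝ᵥ d| := neg_le_abs _
      _ ≤ Real.sqrt (x ⬝ᵥ (S⁻¹ *ᵥ x)) * Real.sqrt (d ⬝ᵥ (S *ᵥ d)) := key
      _ ≤ Real.sqrt (x ⬝ᵥ (S⁻¹ *ᵥ x)) * β := by
          exact mul_le_mul_of_nonneg_left hconf hs0
      _ ≤ α * β * Real.sqrt (x ⬝ᵥ (S⁻¹ *ᵥ x)) := by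
          rw [mul_comm]
          exact mul_le_mul_of_nonneg_right (by nlinarith) hs0
  linarith
end

section
/- Let d ≥ 2 and let Σ ∈ ℝ^{d×d} be a symmetric positive definite matrix written in block form Σ = [[z, δᵀ],[δ, A]] with z ∈ ℝ, δ ∈ ℝ^{d−1}, and A ∈ ℝ^{(d−1)×(d−1)} the principal submatrix of Σ obtained by deleting the first row and first column. Then for every x ∈ ℝ^d with x = (x₁, x′) where x′ ∈ ℝ^{d−1}, one has x′ᵀ A⁻¹ x′ ≤ xᵀ Σ⁻¹ x. -/
open Matrix

private lemma key_ineq {m : ℕ} (S : Matrix (Fin m) (Fin m) ℝ) (hS : S.PosDef)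
    (v x : Fin m → ℝ) :
    2 * (v ⬝ᵥ x) - v ⬝ᵥ (S *ᵥ v) ≤ x ⬝ᵥ (S⁻¹ *ᵥ x) := by
  have hinv : S * S⁻¹ = 1 := mul_nonsing_inv _ hS.det_pos.ne'.isUnit
  set w := v - S⁻¹ *ᵥ x with hw
  have h0 : 0 ≤ w ⬝ᵥ (S *ᵥ w) := by
    simpa using hS.posSemidef.dotProduct_mulVec_nonneg w
  have hSx : S *ᵥ (S⁻¹ *ᵥ x) = x := by
    rw [mulVec_mulVec, hinv, one_mulVec]
  have hsymm : (S⁻¹ *ᵥ x) ⬝ᵥ (S *ᵥ v) = x ⬝ᵥ v := by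
    rw [dotProduct_mulVec, ← mulVec_transpose, ← conjTranspose_eq_transpose_of_trivial,
      hS.isHermitian.eq, hSx]
  have hexp : w ⬝ᵥ (S *ᵥ w)
      = v ⬝ᵥ (S *ᵥ v) - v ⬝ᵥ x - x ⬝ᵥ v + x ⬝ᵥ (S⁻¹ *ᵥ x) := by
    rw [hw, mulVec_sub, hSx, sub_dotProduct, dotProduct_sub, dotProduct_sub, hsymm,
      dotProduct_comm (S⁻¹ *ᵥ x) x]
    ring
  rw [hexp] at h0
  have hc : x ⬝ᵥ v = v ⬝ᵥ x := dotProduct_comm _ _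
  linarith

private lemma cons_quad {m : ℕ} (M : Matrix (Fin (m + 1)) (Fin (m + 1)) ℝ)
    (y : Fin m → ℝ) :
    (Fin.cons 0 y : Fin (m + 1) → ℝ) ⬝ᵥ (M *ᵥ (Fin.cons 0 y : Fin (m + 1) → ℝ))
      = y ⬝ᵥ (M.submatrix Fin.succ Fin.succ *ᵥ y) := by
  simp [dotProduct, mulVec, Fin.sum_univ_succ]

/-- For a symmetric positive definite matrix `Σ` of size `d = n + 1 ≥ 2` with
principal submatrix `A` obtained by deleting the first row and column, and any vector
`x = (x₁, x')`, one has `x'ᵀ A⁻¹ x' ≤ xᵀ Σ⁻¹ x`. -/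
theorem stmt2 (n : ℕ) (hn : 1 ≤ n)
    (S : Matrix (Fin (n + 1)) (Fin (n + 1)) ℝ) (hS : S.PosDef)
    (x : Fin (n + 1) → ℝ) :
    (x ∘ Fin.succ) ⬝ᵥ ((S.submatrix Fin.succ Fin.succ)⁻¹ *ᵥ (x ∘ Fin.succ))
      ≤ x ⬝ᵥ (S⁻¹ *ᵥ x) := by
  set A := S.submatrix Fin.succ Fin.succ with hA
  have hApd : A.PosDef := by
    refine posDef_iff_dotProduct_mulVec.mpr ⟨?_, ?_⟩
    · rw [hA]; exact hS.posSemidef.submatrix Fin.succ |>.isHermitian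
    · intro y hy
      have hz : (Fin.cons 0 y : Fin (n + 1) → ℝ) ≠ 0 := by
        intro h
        apply hy
        funext i
        have := congrFun h i.succ
        simpa using this
      have := hS.dotProduct_mulVec_pos hz
      simpa [cons_quad] using this
  set x' := x ∘ Fin.succ with hx'
  set y := A⁻¹ *ᵥ x' with hy
  have hAy : A *ᵥ y = x' := by
    rw [hy, mulVec_mulVec, mul_nonsing_inv _ hApd.det_pos.ne'.isUnit, one_mulVec]
  have h1 : (Fin.cons 0 y : Fin (n + 1) → ℝ) ⬝ᵥ x = y ⬝ᵥ x' := by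
    simp [dotProduct, Fin.sum_univ_succ, hx']
  have h2 := cons_quad S y
  have hk := key_ineq S hS (Fin.cons 0 y) x
  rw [h1, h2, ← hA, hAy] at hk
  have hcomm : y ⬝ᵥ x' = x' ⬝ᵥ y := dotProduct_comm _ _
  calc x' ⬝ᵥ (A⁻¹ *ᵥ x') = y ⬝ᵥ x' := by rw [← hy, hcomm]
    _ ≤ x ⬝ᵥ (S⁻¹ *ᵥ x) := by linarith
end

section
/- Let τ, c₀ ∈ ℝ with 0 ≤ c₀ < τ, let C₁ ≥ 0, let r ∈ [0,1], and let α_r, α_c ≥ 1 satisfy 1 + α_c ≤ (τ − c₀)(α_r − 1). Then ((τ − c₀) / (τ − c₀ + (1 + α_c) C₁)) · (r + (α_r − 1) C₁) ≥ r. -/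
/-- the scalar inequality at the core of the optimism lemmas: if
`0 ≤ c₀ < τ`, `C₁ ≥ 0`, `r ∈ [0,1]`, `α_r, α_c ≥ 1` and `1 + α_c ≤ (τ - c₀)(α_r - 1)`, then
`((τ - c₀) / (τ - c₀ + (1 + α_c) C₁)) (r + (α_r - 1) C₁) ≥ r`. -/
theorem stmt3 (τ c₀ C₁ r αr αc : ℝ) (hc₀ : 0 ≤ c₀) (hcτ : c₀ < τ) (hC : 0 ≤ C₁)
    (hr0 : 0 ≤ r) (hr1 : r ≤ 1) (hαr : 1 ≤ αr) (hαc : 1 ≤ αc)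
    (hcond : 1 + αc ≤ (τ - c₀) * (αr - 1)) :
    r ≤ (τ - c₀) / (τ - c₀ + (1 + αc) * C₁) * (r + (αr - 1) * C₁) := by
  have hd : 0 < τ - c₀ := by linarith
  have hden : 0 < τ - c₀ + (1 + αc) * C₁ := by nlinarith
  rw [div_mul_eq_mul_div, le_div_iff₀ hden]
  nlinarith [mul_le_mul_of_nonneg_right hcond hC, mul_nonneg (mul_nonneg (by linarith : (0:ℝ) ≤ 1+αc) hC) (by linarith : (0:ℝ) ≤ 1-r)]
end

section
/- Let K ≥ 1 and let r̄, c̄ ∈ [0,1]^K be true mean reward and cost vectors, let τ ∈ ℝ with c̄₁ < τ, let β ∈ ℝ^K with β_a ≥ 0 for all a, and let α_r, α_c ≥ 1 satisfy 1 + α_c ≤ (τ − c̄₁)(α_r − 1). Suppose u^r, u^c ∈ ℝ^K satisfy: (i) r̄_a + (α_r − 1)β_a ≤ u^r_a for all arms a; (ii) c̄_a ≤ u^c_a ≤ c̄_a + (1 + α_c)β_a for all arms a ≠ 1; and (iii) u^c_1 = c̄₁. Let π* ∈ Δ_K satisfy Σ_a π*_a c̄_a ≤ τ, and let π_t ∈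 Δ_K be any maximizer of Σ_a π_a u^r_a over {π ∈ Δ_K : Σ_a π_a u^c_a ≤ τ}. Then Σ_a (π_t)_a u^r_a ≥ Σ_a π*_a r̄_a. -/
/-- MAB optimism lemma (deterministic content). On the confidence event,
with `1 + α_c ≤ (τ - c̄₁)(α_r - 1)`, the optimistic value of the LP maximizer dominates
the true value of any feasible policy. Arm `⟨0, hK⟩` plays the role of the safe arm 1. -/
theorem stmt4 (K : ℕ) (hK : 1 ≤ K) (rbar cbar β ur uc : Fin K → ℝ)
    (hr : ∀ a, rbar a ∈ Set.Icc (0 : ℝ) 1) (hc : ∀ a, cbar a ∈ Set.Icc (0 : ℝ) 1)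
    (τ : ℝ) (hτ : cbar ⟨0, hK⟩ < τ)
    (hβ : ∀ a, 0 ≤ β a)
    (αr αc : ℝ) (hαr : 1 ≤ αr) (hαc : 1 ≤ αc)
    (hcond : 1 + αc ≤ (τ - cbar ⟨0, hK⟩) * (αr - 1))
    (hur : ∀ a, rbar a + (αr - 1) * β a ≤ ur a)
    (huc : ∀ a, a ≠ ⟨0, hK⟩ → cbar a ≤ uc a ∧ uc a ≤ cbar a + (1 + αc) * β a)
    (huc0 : uc ⟨0, hK⟩ = cbar ⟨0, hK⟩)
    (πstar πt : Fin K → ℝ)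
    (hπs_nonneg : ∀ a, 0 ≤ πstar a) (hπs_sum : ∑ a, πstar a = 1)
    (hπs_feas : ∑ a, πstar a * cbar a ≤ τ)
    (hπt_nonneg : ∀ a, 0 ≤ πt a) (hπt_sum : ∑ a, πt a = 1)
    (hπt_feas : ∑ a, πt a * uc a ≤ τ)
    (hπt_max : ∀ π : Fin K → ℝ, (∀ a, 0 ≤ π a) → ∑ a, π a = 1 → ∑ a, π a * uc a ≤ τ →
      ∑ a, π a * ur a ≤ ∑ a, πt a * ur a) :
    ∑ a, πstar a * rbar a ≤ ∑ a, πt a * ur a := by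
  classical
  set z : Fin K := ⟨0, hK⟩ with hzdef
  set B : ℝ := ∑ a, πstar a * β a with hBdef
  clear_value z
  have hB : 0 ≤ B := hBdef ▸ Finset.sum_nonneg fun a _ => mul_nonneg (hπs_nonneg a) (hβ a)
  clear_value B
  have hτz : 0 < τ - cbar z := by linarith
  have hαc0 : (0:ℝ) ≤ 1 + αc := by linarith
  set D : ℝ := (τ - cbar z) + (1 + αc) * B with hDdef
  clear_value D
  have hD : 0 < D := by rw [hDdef]; nlinarith [mul_nonneg hαc0 hB]
  set ρ : ℝ := (τ - cbar z) / D with hρdef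
  clear_value ρ
  have hρ0 : 0 ≤ ρ := hρdef ▸ div_nonneg hτz.le hD.le
  have hρ1 : ρ ≤ 1 := by
    rw [hρdef, div_le_one hD, hDdef]
    nlinarith [mul_nonneg hαc0 hB]
  have hρD : ρ * D = τ - cbar z := by
    rw [hρdef]; exact div_mul_cancel₀ _ hD.ne'
  set π' : Fin K → ℝ := fun a => ρ * πstar a + (1 - ρ) * (if a = z then 1 else 0) with hπ'def
  clear_value π'
  have hπ'_nonneg : ∀ a, 0 ≤ π' a := by
    intro a
    rw [hπ'def]
    apply add_nonneg (mul_nonneg hρ0 (hπs_nonneg a))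
    apply mul_nonneg (by linarith)
    split <;> norm_num
  have hsum : ∀ f : Fin K → ℝ, ∑ a, π' a * f a = ρ * (∑ a, πstar a * f a) + (1 - ρ) * f z := by
    intro f
    have hstep : ∀ a, π' a * f a
        = ρ * (πstar a * f a) + (if a = z then (1 - ρ) * f a else 0) := by
      intro a; simp only [hπ'def]; split <;> ring
    rw [Finset.sum_congr rfl fun a _ => hstep a, Finset.sum_add_distrib,
      Finset.sum_ite_eq' Finset.univ z (fun a => (1 - ρ) * f a), ← Finset.mul_sum]
    simp
  have hπ'_sum : ∑ a, π' a = 1 := by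
    have h := hsum (fun _ => 1)
    simp only [mul_one, hπs_sum] at h
    linarith
  have hucb : ∑ a, πstar a * uc a ≤ τ + (1 + αc) * B := by
    have h1 : ∑ a, πstar a * uc a ≤ ∑ a, πstar a * (cbar a + (1 + αc) * β a) := by
      apply Finset.sum_le_sum
      intro a _
      apply mul_le_mul_of_nonneg_left _ (hπs_nonneg a)
      by_cases h : a = z
      · rw [h, huc0]
        nlinarith [mul_nonneg hαc0 (hβ z)]
      · exact (huc a h).2
    have h2 : ∑ a, πstar a * (cbar a + (1 + αc) * β a)
        = (∑ a, πstar a * cbar a) + (1 + αc) * B := by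
      rw [hBdef, Finset.mul_sum, ← Finset.sum_add_distrib]
      apply Finset.sum_congr rfl
      intro a _; ring
    rw [h2] at h1
    linarith
  have hfeas : ∑ a, π' a * uc a ≤ τ := by
    rw [hsum uc, huc0]
    nlinarith [mul_le_mul_of_nonneg_left hucb hρ0, hρD]
  have hval : ∑ a, πstar a * rbar a ≤ ∑ a, π' a * ur a := by
    rw [hsum ur]
    set R : ℝ := ∑ a, πstar a * rbar a with hRdef
    have h1 : R + (αr - 1) * B ≤ ∑ a, πstar a * ur a := by
      have := Finset.sum_le_sum
        (fun a (_ : a ∈ Finset.univ) => mul_le_mul_of_nonneg_left (hur a) (hπs_nonneg a))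
      have h2 : ∑ a, πstar a * (rbar a + (αr - 1) * β a) = R + (αr - 1) * B := by
        rw [hRdef, hBdef, Finset.mul_sum, ← Finset.sum_add_distrib]
        apply Finset.sum_congr rfl
        intro a _; ring
      rw [h2] at this
      exact this
    have hurz : 0 ≤ ur z := by
      have := hur z
      nlinarith [hβ z, (hr z).1]
    have hR1 : R ≤ 1 := by
      rw [hRdef]
      calc ∑ a, πstar a * rbar a ≤ ∑ a, πstar a * 1 :=
            Finset.sum_le_sum fun a _ => mul_le_mul_of_nonneg_left (hr a).2 (hπs_nonneg a)
        _ = 1 := by simpa using hπs_sum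
    have hR0 : 0 ≤ R :=
      Finset.sum_nonneg fun a _ => mul_nonneg (hπs_nonneg a) (hr a).1
    have hkey : 1 - ρ ≤ ρ * ((αr - 1) * B) := by
      have h2 : (1 - ρ) * D = (1 + αc) * B := by
        have he : (1 - ρ) * D = D - ρ * D := by ring
        rw [he, hρD, hDdef]; ring
      have h3 : (1 + αc) * B ≤ ((τ - cbar z) * (αr - 1)) * B :=
        mul_le_mul_of_nonneg_right hcond hB
      have h4 : ρ * ((αr - 1) * B) * D = ((τ - cbar z) * (αr - 1)) * B := by
        calc ρ * ((αr - 1) * B) * D = (ρ * D) * ((αr - 1) * B) := by ring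
          _ = ((τ - cbar z) * (αr - 1)) * B := by rw [hρD]; ring
      have h5 : (1 - ρ) * D ≤ ρ * ((αr - 1) * B) * D := by linarith
      exact le_of_mul_le_mul_right h5 hD
    nlinarith [mul_le_mul_of_nonneg_left h1 hρ0,
      mul_nonneg (sub_nonneg.2 hρ1) hurz,
      mul_le_mul_of_nonneg_left hR1 (sub_nonneg.2 hρ1)]
  exact le_trans hval (hπt_max π' hπ'_nonneg hπ'_sum hfeas)
end

section
/- Let K ≥ 1, let u^r, u^c ∈ ℝ^K, and let τ ∈ ℝ. Consider the linear program: maximize Σ_a π_a u^r_a over π ∈ Δ_K subject to Σ_a π_a u^c_a ≤ τ. If this program is feasible, then it admits an optimal solution π with at most 2 nonzero entries. -/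
/-- Auxiliary: sum of `Pi.single i c x * f x`. -/
lemma stmt7_sum_single_mul {K : ℕ} (i : Fin K) (c : ℝ) (f : Fin K → ℝ) :
    ∑ x, (Pi.single i c : Fin K → ℝ) x * f x = c * f i := by
  rw [Finset.sum_eq_single i]
  · simp
  · intro b _ hb
    simp [Pi.single_eq_of_ne hb]
  · simp

/-- Auxiliary: a nonzero vector summing to zero has a negative and a positive entry. -/
lemma stmt7_exists_neg_pos {K : ℕ} (d : Fin K → ℝ) (hsum : ∑ x, d x = 0)
    (y : Fin K) (hy : d y ≠ 0) : (∃ x, d x < 0) ∧ (∃ x, 0 < d x) := by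
  constructor
  · by_contra h
    push_neg at h
    exact hy ((Finset.sum_eq_zero_iff_of_nonneg (fun i _ => h i)).1 hsum y (Finset.mem_univ y))
  · by_contra h
    push_neg at h
    have hsum' : ∑ x, (-d) x = 0 := by simp [hsum]
    have := (Finset.sum_eq_zero_iff_of_nonneg
      (f := -d) (fun i _ => by simpa using h i)).1 hsum' y (Finset.mem_univ y)
    simp only [Pi.neg_apply, neg_eq_zero] at this
    exact hy this

/-- Auxiliary: solving 2 homogeneous linear equations in 3 unknowns nontrivially. -/
lemma stmt7_solve3 (x y z : ℝ) :
    ∃ p q r : ℝ, ¬(p = 0 ∧ q = 0 ∧ r = 0) ∧ p + q + r = 0 ∧ p * x + q * y + r * z = 0 := by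
  by_cases hxy : x = y
  · exact ⟨1, -1, 0, by norm_num, by ring, by rw [hxy]; ring⟩
  · exact ⟨y - z, z - x, x - y, fun h => hxy (by linarith [h.2.2]), by ring, by ring⟩

/-- Auxiliary: moving along an improving direction to shrink the support. -/
lemma stmt7_reduceDir {K : ℕ} (ur uc : Fin K → ℝ) (π d : Fin K → ℝ)
    (hpos : ∀ a, 0 ≤ π a)
    (hsupp : ∀ x, d x ≠ 0 → π x ≠ 0)
    (hneg : ∃ x, d x < 0)
    (hdsum : ∑ x, d x = 0)
    (hdc : ∑ x, d x * uc x = 0)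
    (hdr : 0 ≤ ∑ x, d x * ur x) :
    ∃ π' : Fin K → ℝ, (∀ a, 0 ≤ π' a) ∧ ∑ a, π' a = ∑ a, π a ∧
      ∑ a, π' a * uc a = ∑ a, π a * uc a ∧
      ∑ a, π a * ur a ≤ ∑ a, π' a * ur a ∧
      (Finset.univ.filter (fun a => π' a ≠ 0)).card <
        (Finset.univ.filter (fun a => π a ≠ 0)).card := by
  classical
  set N : Finset (Fin K) := Finset.univ.filter (fun x => d x < 0) with hN
  have hNne : N.Nonempty := by
    obtain ⟨x, hx⟩ := hneg
    exact ⟨x, by simp [hN, hx]⟩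
  set t : ℝ := N.inf' hNne (fun x => π x / (-d x)) with htdef
  have ht : 0 < t := by
    rw [htdef, Finset.lt_inf'_iff]
    intro i hi
    have hdi : d i < 0 := by simpa [hN] using hi
    have hpi : 0 < π i := lt_of_le_of_ne (hpos i) (Ne.symm (hsupp i (ne_of_lt hdi)))
    exact div_pos hpi (by linarith)
  set π' : Fin K → ℝ := fun x => π x + t * d x with hπ'
  have hle : ∀ x, d x < 0 → t ≤ π x / (-d x) := by
    intro x hx
    exact Finset.inf'_le _ (by simp [hN, hx])
  have hnonneg : ∀ a, 0 ≤ π' a := by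
    intro a
    by_cases hda : d a < 0
    · have h1 := hle a hda
      have h2 : t * (-d a) ≤ π a := (le_div_iff₀ (by linarith)).1 h1
      simp only [hπ']
      nlinarith
    · push_neg at hda
      exact add_nonneg (hpos a) (mul_nonneg ht.le hda)
  have hsum1 : ∑ a, π' a = ∑ a, π a := by
    simp [hπ', Finset.sum_add_distrib, ← Finset.mul_sum, hdsum]
  have hsumc : ∑ a, π' a * uc a = ∑ a, π a * uc a := by
    simp only [hπ', add_mul, Finset.sum_add_distrib, mul_assoc, ← Finset.mul_sum, hdc,
      mul_zero, add_zero]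
  have hsumr : ∑ a, π a * ur a ≤ ∑ a, π' a * ur a := by
    have : ∑ a, π' a * ur a = ∑ a, π a * ur a + t * ∑ a, d a * ur a := by
      simp only [hπ', add_mul, Finset.sum_add_distrib, mul_assoc, ← Finset.mul_sum]
    rw [this]
    nlinarith
  obtain ⟨x₀, hx₀mem, hx₀eq⟩ := Finset.exists_mem_eq_inf' hNne (fun x => π x / (-d x))
  have hdx₀ : d x₀ < 0 := by simpa [hN] using hx₀mem
  have hπ'x₀ : π' x₀ = 0 := by
    have hne : d x₀ ≠ 0 := ne_of_lt hdx₀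
    simp only [hπ', htdef, hx₀eq]
    field_simp
    ring
  have hπx₀ : π x₀ ≠ 0 := hsupp x₀ (ne_of_lt hdx₀)
  have hss : Finset.univ.filter (fun a => π' a ≠ 0) ⊂ Finset.univ.filter (fun a => π a ≠ 0) := by
    constructor
    · intro x hx
      simp only [Finset.mem_filter, Finset.mem_univ, true_and] at hx ⊢
      intro hπx
      apply hx
      have hdx : d x = 0 := by
        by_contra hdx
        exact hsupp x hdx hπx
      simp [hπ', hπx, hdx]
    · intro hsub
      have := hsub (by simp [hπx₀] : x₀ ∈ Finset.univ.filter (fun a => π a ≠ 0))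
      simp only [Finset.mem_filter, Finset.mem_univ, true_and] at this
      exact this hπ'x₀
  exact ⟨π', hnonneg, hsum1, hsumc, hsumr, Finset.card_lt_card hss⟩

/-- Auxiliary: one step of support reduction when the support has ≥ 3 arms. -/
lemma stmt7_reduce {K : ℕ} (ur uc : Fin K → ℝ) (π : Fin K → ℝ)
    (hpos : ∀ a, 0 ≤ π a)
    (h3 : 3 ≤ (Finset.univ.filter (fun a => π a ≠ 0)).card) :
    ∃ π' : Fin K → ℝ, (∀ a, 0 ≤ π' a) ∧ ∑ a, π' a = ∑ a, π a ∧
      ∑ a, π' a * uc a = ∑ a, π a * uc a ∧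
      ∑ a, π a * ur a ≤ ∑ a, π' a * ur a ∧
      (Finset.univ.filter (fun a => π' a ≠ 0)).card <
        (Finset.univ.filter (fun a => π a ≠ 0)).card := by
  classical
  obtain ⟨a, b, c, ha, hb, hc, hab, hac, hbc⟩ := Finset.two_lt_card_iff.1 (show 2 < (Finset.univ.filter (fun a => π a ≠ 0)).card by omega)
  simp only [Finset.mem_filter, Finset.mem_univ, true_and] at ha hb hc
  obtain ⟨p, q, r, hnz, hsum0, hsumuc⟩ := stmt7_solve3 (uc a) (uc b) (uc c)
  set d : Fin K → ℝ := fun x => (Pi.single a p : Fin K → ℝ) x + (Pi.single b q : Fin K → ℝ) x + (Pi.single c r : Fin K → ℝ) x with hd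
  have hda : d a = p := by
    simp [hd, Pi.single_eq_of_ne hab, Pi.single_eq_of_ne hac]
  have hdb : d b = q := by
    simp [hd, Pi.single_eq_of_ne (Ne.symm hab), Pi.single_eq_of_ne hbc]
  have hdc' : d c = r := by
    simp [hd, Pi.single_eq_of_ne (Ne.symm hac), Pi.single_eq_of_ne (Ne.symm hbc)]
  have hsumf : ∀ f : Fin K → ℝ, ∑ x, d x * f x = p * f a + q * f b + r * f c := by
    intro f
    simp [hd, add_mul, Finset.sum_add_distrib, stmt7_sum_single_mul]
  have hdsum : ∑ x, d x = 0 := by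
    have := hsumf (fun _ => 1)
    simpa [hsum0] using this
  have hdcsum : ∑ x, d x * uc x = 0 := by rw [hsumf]; exact hsumuc
  have hsupp : ∀ x, d x ≠ 0 → π x ≠ 0 := by
    intro x hx
    by_contra hπx
    apply hx
    simp only [hd]
    have h1 : x ≠ a := fun h => ha (h ▸ hπx)
    have h2 : x ≠ b := fun h => hb (h ▸ hπx)
    have h3' : x ≠ c := fun h => hc (h ▸ hπx)
    simp [Pi.single_eq_of_ne h1, Pi.single_eq_of_ne h2, Pi.single_eq_of_ne h3']
  have hdy : ∃ y, d y ≠ 0 := by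
    by_contra h
    push_neg at h
    apply hnz
    exact ⟨hda ▸ h a, hdb ▸ h b, hdc' ▸ h c⟩
  obtain ⟨y, hy⟩ := hdy
  obtain ⟨hneg, hpos'⟩ := stmt7_exists_neg_pos d hdsum y hy
  rcases le_or_gt 0 (∑ x, d x * ur x) with hdr | hdr
  · exact stmt7_reduceDir ur uc π d hpos hsupp hneg hdsum hdcsum hdr
  · have h1 : ∀ x, (-d) x ≠ 0 → π x ≠ 0 := fun x hx => hsupp x (by simpa using hx)
    have h2 : ∃ x, (-d) x < 0 := by
      obtain ⟨x, hx⟩ := hpos'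
      exact ⟨x, by simpa using hx⟩
    have h3' : ∑ x, (-d) x = 0 := by simp [hdsum]
    have h4 : ∑ x, (-d) x * uc x = 0 := by
      simp only [Pi.neg_apply, neg_mul]
      rw [Finset.sum_neg_distrib, hdcsum, neg_zero]
    have h5 : 0 ≤ ∑ x, (-d) x * ur x := by
      simp only [Pi.neg_apply, neg_mul]
      rw [Finset.sum_neg_distrib]
      linarith
    exact stmt7_reduceDir ur uc π (-d) hpos h1 h2 h3' h4 h5

/-- Auxiliary: full reduction to support of size at most 2, by strong induction. -/
lemma stmt7_reduceAll {K : ℕ} (ur uc : Fin K → ℝ) :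
    ∀ n (π : Fin K → ℝ), (Finset.univ.filter (fun a => π a ≠ 0)).card ≤ n →
      (∀ a, 0 ≤ π a) →
      ∃ π' : Fin K → ℝ, (∀ a, 0 ≤ π' a) ∧ ∑ a, π' a = ∑ a, π a ∧
        ∑ a, π' a * uc a = ∑ a, π a * uc a ∧
        ∑ a, π a * ur a ≤ ∑ a, π' a * ur a ∧
        (Finset.univ.filter (fun a => π' a ≠ 0)).card ≤ 2 := by
  intro n
  induction n with
  | zero =>
    intro π hcard hpos
    refine ⟨π, hpos, rfl, rfl, le_refl _, ?_⟩
    omega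
  | succ m ih =>
    intro π hcard hpos
    by_cases h2 : (Finset.univ.filter (fun a => π a ≠ 0)).card ≤ 2
    · exact ⟨π, hpos, rfl, rfl, le_refl _, h2⟩
    · obtain ⟨π', h1, h2', h3, h4, h5⟩ := stmt7_reduce ur uc π hpos (by omega)
      obtain ⟨π'', g1, g2, g3, g4, g5⟩ := ih π' (by omega) h1
      exact ⟨π'', g1, g2.trans h2', g3.trans h3, h4.trans g4, g5⟩

/-- the constrained bandit LP `max ∑ π_a u^r_a` over the simplex subject to
`∑ π_a u^c_a ≤ τ`, if feasible, has an optimal solution supported on at most 2 arms. -/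
theorem stmt7 (K : ℕ) (hK : 1 ≤ K) (ur uc : Fin K → ℝ) (τ : ℝ)
    (hfeas : ∃ π : Fin K → ℝ, (∀ a, 0 ≤ π a) ∧ ∑ a, π a = 1 ∧ ∑ a, π a * uc a ≤ τ) :
    ∃ π : Fin K → ℝ, (∀ a, 0 ≤ π a) ∧ ∑ a, π a = 1 ∧ ∑ a, π a * uc a ≤ τ ∧
      (∀ π' : Fin K → ℝ, (∀ a, 0 ≤ π' a) → ∑ a, π' a = 1 → ∑ a, π' a * uc a ≤ τ →
        ∑ a, π' a * ur a ≤ ∑ a, π a * ur a) ∧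
      (Finset.univ.filter (fun a => π a ≠ 0)).card ≤ 2 := by
  classical
  set S : Set (Fin K → ℝ) :=
    {π | (∀ a, 0 ≤ π a) ∧ ∑ a, π a = 1 ∧ ∑ a, π a * uc a ≤ τ} with hS
  have hSsub : S ⊆ stdSimplex ℝ (Fin K) := fun π hπ => ⟨hπ.1, hπ.2.1⟩
  have hclosed : IsClosed S := by
    have h1 : IsClosed {π : Fin K → ℝ | ∀ a, 0 ≤ π a} := by
      have he : {π : Fin K → ℝ | ∀ a, 0 ≤ π a} = ⋂ a, {π | 0 ≤ π a} := by ext; simp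
      rw [he]
      exact isClosed_iInter fun a => isClosed_le continuous_const (continuous_apply a)
    have h2 : IsClosed {π : Fin K → ℝ | ∑ a, π a = 1} :=
      isClosed_eq (by continuity) continuous_const
    have h3 : IsClosed {π : Fin K → ℝ | ∑ a, π a * uc a ≤ τ} :=
      isClosed_le (by continuity) continuous_const
    have : S = {π : Fin K → ℝ | ∀ a, 0 ≤ π a} ∩ {π | ∑ a, π a = 1} ∩
        {π | ∑ a, π a * uc a ≤ τ} := by
      ext π; simp [hS, Set.mem_setOf_eq, and_assoc]
    rw [this]
    exact (h1.inter h2).inter h3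
  have hcompact : IsCompact S :=
    (isCompact_stdSimplex ℝ (Fin K)).of_isClosed_subset hclosed hSsub
  have hSne : S.Nonempty := hfeas
  have hcont : ContinuousOn (fun π : Fin K → ℝ => ∑ a, π a * ur a) S :=
    Continuous.continuousOn (by continuity)
  obtain ⟨πstar, hπstar, hmax⟩ := hcompact.exists_isMaxOn hSne hcont
  obtain ⟨hpos, hsum1, hbudget⟩ := hπstar
  obtain ⟨π', h1, h2, h3, h4, h5⟩ := stmt7_reduceAll ur uc
    (Finset.univ.filter (fun a => πstar a ≠ 0)).card πstar (le_refl _) hpos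
  refine ⟨π', h1, h2.trans hsum1, ?_, ?_, h5⟩
  · rw [h3]; exact hbudget
  · intro π'' g1 g2 g3
    calc ∑ a, π'' a * ur a ≤ ∑ a, πstar a * ur a := hmax ⟨g1, g2, g3⟩
    _ ≤ ∑ a, π' a * ur a := h4
end

section
/- Let K ≥ 1, m ≥ 1, let u^r ∈ ℝ^K, let u^{c,(1)}, …, u^{c,(m)} ∈ ℝ^K, and let τ₁, …, τ_m ∈ ℝ. Consider the linear program: maximize Σ_a π_a u^r_a over π ∈ Δ_K subject to Σ_a π_a u^{c,(i)}_a ≤ τ_i for every i = 1, …, m. If this program is feasible, then it admits an optimal solution π with at most m + 1 nonzero entries. -/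
noncomputable def stmt8Lmap {α : Type} [Fintype α] {N : ℕ} (v : Fin N → α → ℝ) :
    (α → ℝ) →ₗ[ℝ] (Fin N → ℝ) where
  toFun d := fun j => ∑ a, d a * v j a
  map_add' x y := by
    funext j
    simp [add_mul, Finset.sum_add_distrib]
  map_smul' c x := by
    funext j
    simp [Finset.mul_sum, mul_assoc]

lemma stmt8_exists_ker {α : Type} [Fintype α] {N : ℕ} (v : Fin N → α → ℝ)
    (h : N < Fintype.card α) : ∃ d : α → ℝ, d ≠ 0 ∧ ∀ j, ∑ a, d a * v j a = 0 := by
  have hni : ¬ Function.Injective (stmt8Lmap v) := by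
    intro hinj
    have hle := LinearMap.finrank_le_finrank_of_injective hinj
    rw [Module.finrank_fintype_fun_eq_card, Module.finrank_fintype_fun_eq_card,
      Fintype.card_fin] at hle
    omega
  obtain ⟨x, y, hxy, hne⟩ := Function.not_injective_iff.mp hni
  refine ⟨x - y, sub_ne_zero_of_ne hne, fun j => ?_⟩
  have : stmt8Lmap v (x - y) = 0 := by rw [map_sub, hxy, sub_self]
  have := congrFun this j
  simpa [stmt8Lmap] using this

lemma stmt8_shift_sum {K : ℕ} (π d : Fin K → ℝ) (w : Fin K → ℝ) (t : ℝ) :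
    ∑ a, (π a + t * d a) * w a = (∑ a, π a * w a) + t * ∑ a, d a * w a := by
  rw [Finset.mul_sum, ← Finset.sum_add_distrib]
  congr 1; funext a; ring

lemma stmt8_reduce {K m : ℕ} (ur : Fin K → ℝ) (uc : Fin m → Fin K → ℝ) (τ : Fin m → ℝ)
    (π : Fin K → ℝ) (hpos : ∀ a, 0 ≤ π a) (hsum : ∑ a, π a = 1)
    (hcon : ∀ i, ∑ a, π a * uc i a ≤ τ i)
    (hopt : ∀ π' : Fin K → ℝ, (∀ a, 0 ≤ π' a) → ∑ a, π' a = 1 →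
        (∀ i, ∑ a, π' a * uc i a ≤ τ i) → ∑ a, π' a * ur a ≤ ∑ a, π a * ur a)
    (hcard : m + 1 < (Finset.univ.filter (fun a => π a ≠ 0)).card) :
    ∃ π' : Fin K → ℝ, (∀ a, 0 ≤ π' a) ∧ ∑ a, π' a = 1 ∧
      (∀ i, ∑ a, π' a * uc i a ≤ τ i) ∧
      (∑ a, π' a * ur a) = (∑ a, π a * ur a) ∧
      (Finset.univ.filter (fun a => π' a ≠ 0)).card <
        (Finset.univ.filter (fun a => π a ≠ 0)).card := by
  set S : Finset (Fin K) := Finset.univ.filter (fun a => π a ≠ 0) with hS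
  have hπS : ∀ a, a ∉ S → π a = 0 := by
    intro a ha; by_contra h; exact ha (by simp [hS, h])
  have hπpos : ∀ a ∈ S, 0 < π a := by
    intro a ha
    have : π a ≠ 0 := by simpa [hS] using ha
    exact lt_of_le_of_ne (hpos a) (Ne.symm this)
  -- get a kernel direction
  have hcards : m + 1 < Fintype.card ↥S := by rwa [Fintype.card_coe]
  obtain ⟨d', hd'ne, hd'ker⟩ := stmt8_exists_ker
    (Fin.cases (fun _ : ↥S => (1 : ℝ)) (fun i a => uc i ↑a)) hcards
  set d : Fin K → ℝ := fun a => if h : a ∈ S then d' ⟨a, h⟩ else 0 with hd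
  have hd0 : ∀ a, a ∉ S → d a = 0 := by intro a ha; simp [hd, ha]
  have hsum_eq : ∀ w : Fin K → ℝ, ∑ a, d a * w a = ∑ a : ↥S, d' a * w ↑a := by
    intro w
    calc ∑ a : Fin K, d a * w a = ∑ a ∈ S, d a * w a :=
          (Finset.sum_subset (Finset.subset_univ S)
            (fun a _ ha => by rw [hd0 a ha, zero_mul])).symm
      _ = ∑ a : ↥S, d ↑a * w ↑a := (Finset.sum_coe_sort S _).symm
      _ = ∑ a : ↥S, d' a * w ↑a := by
          refine Finset.sum_congr rfl fun a _ => ?_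
          congr 1
          simp [hd]
  have hdsum : ∑ a, d a = 0 := by
    have h0 := hd'ker 0
    simp only [Fin.cases_zero, mul_one] at h0
    have h1 := hsum_eq (fun _ => 1)
    simp only [mul_one] at h1
    rw [h1, h0]
  have hduc : ∀ i, ∑ a, d a * uc i a = 0 := by
    intro i
    have h0 := hd'ker i.succ
    simp only [Fin.cases_succ] at h0
    rw [hsum_eq (uc i)]
    exact h0
  have hdne : d ≠ 0 := by
    intro h
    apply hd'ne
    funext a
    have := congrFun h ↑a
    simpa [hd, a.2] using this
  have hneg : ∀ e : Fin K → ℝ, (∀ a, a ∉ S → e a = 0) → ∑ a, e a = 0 → e ≠ 0 →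
      (S.filter (fun a => e a < 0)).Nonempty := by
    intro e he0 hesum hene
    by_contra hempty
    rw [Finset.not_nonempty_iff_eq_empty] at hempty
    apply hene
    have hnn : ∀ a, 0 ≤ e a := by
      intro a
      by_cases ha : a ∈ S
      · by_contra hlt
        push_neg at hlt
        have : a ∈ S.filter (fun a => e a < 0) := Finset.mem_filter.mpr ⟨ha, hlt⟩
        rw [hempty] at this
        exact absurd this (Finset.notMem_empty a)
      · rw [he0 a ha]
    funext a
    exact (Finset.sum_eq_zero_iff_of_nonneg (fun a _ => hnn a)).mp hesum a (Finset.mem_univ a)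
  have key : ∀ e : Fin K → ℝ, (∀ a, a ∉ S → e a = 0) → ∑ a, e a = 0 →
      (∀ i, ∑ a, e a * uc i a = 0) → ¬ (0 < ∑ a, e a * ur a) := by
    intro e he0 hesum heuc hpos'
    have hene : e ≠ 0 := by
      intro h
      rw [h] at hpos'
      simp at hpos'
    have hTne := hneg e he0 hesum hene
    set T := S.filter (fun a => e a < 0) with hT
    set t := T.inf' hTne (fun a => π a / (-e a)) with ht
    have htpos : 0 < t := by
      rw [ht, Finset.lt_inf'_iff]
      intro a haT
      obtain ⟨haS, hae⟩ := Finset.mem_filter.mp haT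
      exact div_pos (hπpos a haS) (by linarith)
    have hπ'pos : ∀ a, 0 ≤ π a + t * e a := by
      intro a
      rcases lt_or_ge (e a) 0 with h | h
      · have haS : a ∈ S := by
          by_contra hx
          rw [he0 a hx] at h
          linarith
        have haT : a ∈ T := Finset.mem_filter.mpr ⟨haS, h⟩
        have hle : t ≤ π a / (-e a) := Finset.inf'_le _ haT
        have := (le_div_iff₀ (by linarith : (0:ℝ) < -e a)).mp hle
        nlinarith
      · have : 0 ≤ t * e a := mul_nonneg htpos.le h
        linarith [hpos a]
    have h1 : ∑ a, (π a + t * e a) = 1 := by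
      rw [Finset.sum_add_distrib, hsum, ← Finset.mul_sum, hesum]
      ring
    have h2 : ∀ i, ∑ a, (π a + t * e a) * uc i a ≤ τ i := by
      intro i
      rw [stmt8_shift_sum, heuc i]
      simpa using hcon i
    have h3 := hopt _ hπ'pos h1 h2
    rw [stmt8_shift_sum] at h3
    nlinarith
  have hc0 : ∑ a, d a * ur a = 0 := by
    have h1 := key d hd0 hdsum hduc
    have h2 := key (fun a => -d a) (fun a ha => by show -d a = 0; rw [hd0 a ha]; ring)
      (by simp [hdsum]) (fun i => by simp [neg_mul]; simpa [neg_mul] using hduc i)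
    push_neg at h1 h2
    have he : ∑ a, -d a * ur a = -∑ a, d a * ur a := by
      simp [neg_mul]
    rw [he] at h2
    linarith
  have hTne := hneg d hd0 hdsum hdne
  set T := S.filter (fun a => d a < 0) with hT
  set t := T.inf' hTne (fun a => π a / (-d a)) with ht
  obtain ⟨a₀, ha₀T, ha₀⟩ := T.exists_mem_eq_inf' hTne (fun a => π a / (-d a))
  have hd₀ : d a₀ < 0 := (Finset.mem_filter.mp ha₀T).2
  have htpos : 0 < t := by
    rw [ht, Finset.lt_inf'_iff]
    intro a haT
    obtain ⟨haS, hae⟩ := Finset.mem_filter.mp haT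
    exact div_pos (hπpos a haS) (by linarith)
  have hπ'pos : ∀ a, 0 ≤ π a + t * d a := by
    intro a
    rcases lt_or_ge (d a) 0 with h | h
    · have haS : a ∈ S := by
        by_contra hx
        rw [hd0 a hx] at h
        linarith
      have haT : a ∈ T := Finset.mem_filter.mpr ⟨haS, h⟩
      have hle : t ≤ π a / (-d a) := Finset.inf'_le _ haT
      have := (le_div_iff₀ (by linarith : (0:ℝ) < -d a)).mp hle
      nlinarith
    · have : 0 ≤ t * d a := mul_nonneg htpos.le h
      linarith [hpos a]
  have hzero : π a₀ + t * d a₀ = 0 := by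
    have hteq : t = π a₀ / (-d a₀) := ha₀
    rw [hteq]
    have hne : -d a₀ ≠ 0 := by linarith
    field_simp
    rw [div_self (ne_of_lt hd₀)]; ring
  refine ⟨fun a => π a + t * d a, hπ'pos, ?_, ?_, ?_, ?_⟩
  · rw [Finset.sum_add_distrib, hsum, ← Finset.mul_sum, hdsum]
    ring
  · intro i
    rw [stmt8_shift_sum, hduc i]
    simpa using hcon i
  · rw [stmt8_shift_sum, hc0]
    ring
  · have hsub : (Finset.univ.filter (fun a => (π a + t * d a) ≠ 0)) ⊆ S.erase a₀ := by
      intro a ha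
      have hane : π a + t * d a ≠ 0 := (Finset.mem_filter.mp ha).2
      have haS : a ∈ S := by
        by_contra h
        exact hane (by rw [hπS a h, hd0 a h]; ring)
      refine Finset.mem_erase.mpr ⟨fun h => hane (by rw [h]; exact hzero), haS⟩
    calc (Finset.univ.filter (fun a => (π a + t * d a) ≠ 0)).card
        ≤ (S.erase a₀).card := Finset.card_le_card hsub
      _ < S.card := Finset.card_erase_lt_of_mem (Finset.mem_filter.mp ha₀T).1


/-- the `m`-constraint LP `max ∑ π_a u^r_a` over the simplex subject to
`∑ π_a u^{c,(i)}_a ≤ τ_i` for all `i`, if feasible, has an optimal solution supported on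
at most `m + 1` arms. -/
theorem stmt8 (K m : ℕ) (hK : 1 ≤ K) (hm : 1 ≤ m)
    (ur : Fin K → ℝ) (uc : Fin m → Fin K → ℝ) (τ : Fin m → ℝ)
    (hfeas : ∃ π : Fin K → ℝ, (∀ a, 0 ≤ π a) ∧ ∑ a, π a = 1 ∧
      ∀ i, ∑ a, π a * uc i a ≤ τ i) :
    ∃ π : Fin K → ℝ, (∀ a, 0 ≤ π a) ∧ ∑ a, π a = 1 ∧ (∀ i, ∑ a, π a * uc i a ≤ τ i) ∧
      (∀ π' : Fin K → ℝ, (∀ a, 0 ≤ π' a) → ∑ a, π' a = 1 →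
        (∀ i, ∑ a, π' a * uc i a ≤ τ i) →
        ∑ a, π' a * ur a ≤ ∑ a, π a * ur a) ∧
      (Finset.univ.filter (fun a => π a ≠ 0)).card ≤ m + 1 := by
  classical
  set F : Set (Fin K → ℝ) :=
    {π | (∀ a, 0 ≤ π a) ∧ ∑ a, π a = 1 ∧ ∀ i, ∑ a, π a * uc i a ≤ τ i} with hF
  have hcontsum : ∀ w : Fin K → ℝ, Continuous (fun π : Fin K → ℝ => ∑ a, π a * w a) :=
    fun w => continuous_finset_sum _ fun a _ => (continuous_apply a).mul continuous_const
  have hclosed : IsClosed F := by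
    have hFeq : F = (⋂ a, {π : Fin K → ℝ | 0 ≤ π a}) ∩
        ({π : Fin K → ℝ | ∑ a, π a = 1} ∩
          ⋂ i, {π : Fin K → ℝ | ∑ a, π a * uc i a ≤ τ i}) := by
      ext π
      simp only [hF, Set.mem_setOf_eq, Set.mem_inter_iff, Set.mem_iInter]
    rw [hFeq]
    exact (isClosed_iInter fun a => isClosed_le continuous_const (continuous_apply a)).inter
      ((isClosed_eq (continuous_finset_sum _ fun a _ => continuous_apply a)
          continuous_const).inter
        (isClosed_iInter fun i => isClosed_le (hcontsum (uc i)) continuous_const))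
  have hsub : F ⊆ Set.Icc (0 : Fin K → ℝ) 1 := by
    rintro π ⟨h1, h2, h3⟩
    refine Set.mem_Icc.mpr ⟨fun a => h1 a, fun a => ?_⟩
    calc π a ≤ ∑ b, π b := Finset.single_le_sum (fun b _ => h1 b) (Finset.mem_univ a)
      _ = 1 := h2
  have hcomp : IsCompact F := IsCompact.of_isClosed_subset isCompact_Icc hclosed hsub
  have hne : F.Nonempty := by
    obtain ⟨π, h⟩ := hfeas
    exact ⟨π, h⟩
  obtain ⟨π₀, hπ₀F, hmax⟩ := hcomp.exists_isMaxOn hne ((hcontsum ur).continuousOn)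
  suffices H : ∀ n : ℕ, ∀ π : Fin K → ℝ, (∀ a, 0 ≤ π a) → ∑ a, π a = 1 →
      (∀ i, ∑ a, π a * uc i a ≤ τ i) →
      (∀ π' : Fin K → ℝ, (∀ a, 0 ≤ π' a) → ∑ a, π' a = 1 →
        (∀ i, ∑ a, π' a * uc i a ≤ τ i) → ∑ a, π' a * ur a ≤ ∑ a, π a * ur a) →
      (Finset.univ.filter (fun a => π a ≠ 0)).card ≤ n →
      (∃ π : Fin K → ℝ, (∀ a, 0 ≤ π a) ∧ ∑ a, π a = 1 ∧
        (∀ i, ∑ a, π a * uc i a ≤ τ i) ∧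
        (∀ π' : Fin K → ℝ, (∀ a, 0 ≤ π' a) → ∑ a, π' a = 1 →
          (∀ i, ∑ a, π' a * uc i a ≤ τ i) →
          ∑ a, π' a * ur a ≤ ∑ a, π a * ur a) ∧
        (Finset.univ.filter (fun a => π a ≠ 0)).card ≤ m + 1) by
    obtain ⟨h1, h2, h3⟩ := hπ₀F
    exact H _ π₀ h1 h2 h3
      (fun π' a b c => isMaxOn_iff.mp hmax π' ⟨a, b, c⟩) le_rfl
  intro n
  induction n with
  | zero =>
    intro π h1 h2 h3 hopt hcard
    exact ⟨π, h1, h2, h3, hopt, le_trans hcard (Nat.zero_le _)⟩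
  | succ n ih =>
    intro π h1 h2 h3 hopt hcard
    by_cases hle : (Finset.univ.filter (fun a => π a ≠ 0)).card ≤ m + 1
    · exact ⟨π, h1, h2, h3, hopt, hle⟩
    · push_neg at hle
      obtain ⟨π', p1, p2, p3, peq, plt⟩ := stmt8_reduce ur uc τ π h1 h2 h3 hopt hle
      exact ih π' p1 p2 p3
        (fun π'' a b c => by rw [peq]; exact hopt π'' a b c)
        (Nat.lt_succ_iff.mp (lt_of_lt_of_le plt hcard))
end

section
/- Let u^r₁, u^r₂, u^c₁, u^c₂, τ ∈ ℝ with u^c₁ < τ < u^c₂ and u^r₂ ≥ u^r₁. Then the policy π* = ((u^c₂ − τ)/(u^c₂ − u^c₁), (τ − u^c₁)/(u^c₂ − u^c₁)) lies in Δ₂, satisfies the constraint π*₁ u^c₁ + π*₂ u^c₂ ≤ τ, and maximizes π₁ u^r₁ + π₂ u^r₂ over all π ∈ Δ₂ with π₁ u^c₁ + π₂ u^c₂ ≤ τ. -/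
/-- the explicit two-arm optimal mixture policy: if `u^c₁ < τ < u^c₂` and
`u^r₂ ≥ u^r₁`, then `π* = ((u^c₂ - τ)/(u^c₂ - u^c₁), (τ - u^c₁)/(u^c₂ - u^c₁))` lies in the
simplex, is feasible, and maximizes the expected reward among feasible policies. -/
theorem stmt9 (ur1 ur2 uc1 uc2 τ : ℝ) (h1 : uc1 < τ) (h2 : τ < uc2) (hr : ur1 ≤ ur2) :
    0 ≤ (uc2 - τ) / (uc2 - uc1) ∧
    0 ≤ (τ - uc1) / (uc2 - uc1) ∧
    (uc2 - τ) / (uc2 - uc1) + (τ - uc1) / (uc2 - uc1) = 1 ∧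
    (uc2 - τ) / (uc2 - uc1) * uc1 + (τ - uc1) / (uc2 - uc1) * uc2 ≤ τ ∧
    ∀ q1 q2 : ℝ, 0 ≤ q1 → 0 ≤ q2 → q1 + q2 = 1 → q1 * uc1 + q2 * uc2 ≤ τ →
      q1 * ur1 + q2 * ur2
        ≤ (uc2 - τ) / (uc2 - uc1) * ur1 + (τ - uc1) / (uc2 - uc1) * ur2 := by
  have hd : 0 < uc2 - uc1 := by linarith
  refine ⟨div_nonneg (by linarith) hd.le, div_nonneg (by linarith) hd.le, by field_simp; ring, ?_, ?_⟩
  · rw [div_mul_eq_mul_div, div_mul_eq_mul_div, ← add_div, div_le_iff₀ hd]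
    ring_nf
    nlinarith
  · intro q1 q2 hq1 hq2 hsum hfeas
    have hq : q1 = 1 - q2 := by linarith
    subst hq
    have key : 0 ≤ τ - uc1 - q2 * (uc2 - uc1) := by nlinarith
    rw [div_mul_eq_mul_div, div_mul_eq_mul_div, ← add_div, le_div_iff₀ hd]
    nlinarith [mul_nonneg (show (0:ℝ) ≤ ur2 - ur1 by linarith) key]
end

section
/- For all real numbers x ∈ [1/2, 1) and y ∈ (0, 1), the binary relative entropy satisfies d(x, y) := x·log(x/y) + (1 − x)·log((1 − x)/(1 − y)) ≥ (1/2)·log(1/(4y)). -/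
/-- Nonnegativity of binary relative entropy. -/
lemma dnn (x y : ℝ) (hx0 : 0 < x) (hx1 : x < 1) (hy0 : 0 < y) (hy1 : y < 1) :
    0 ≤ x * Real.log (x / y) + (1 - x) * Real.log ((1 - x) / (1 - y)) := by
  have hx1' : (0:ℝ) < 1 - x := by linarith
  have hy1' : (0:ℝ) < 1 - y := by linarith
  have h1 : Real.log (y / x) ≤ y / x - 1 := Real.log_le_sub_one_of_pos (by positivity)
  have h2 : Real.log ((1 - y) / (1 - x)) ≤ (1 - y) / (1 - x) - 1 :=
    Real.log_le_sub_one_of_pos (by positivity)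
  have e1 : Real.log (x / y) = - Real.log (y / x) := by
    rw [← Real.log_inv]; congr 1; field_simp
  have e2 : Real.log ((1 - x) / (1 - y)) = - Real.log ((1 - y) / (1 - x)) := by
    rw [← Real.log_inv]; congr 1; field_simp
  have hA : x * Real.log (y / x) ≤ y - x := by
    have h := mul_le_mul_of_nonneg_left h1 hx0.le
    have hxx : x * (y / x - 1) = y - x := by field_simp
    linarith
  have hB : (1 - x) * Real.log ((1 - y) / (1 - x)) ≤ x - y := by
    have h := mul_le_mul_of_nonneg_left h2 hx1'.le
    have hxx : (1 - x) * ((1 - y) / (1 - x) - 1) = x - y := by field_simp; ring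
    linarith
  rw [e1, e2]
  nlinarith [hA, hB]

/-- for `x ∈ [1/2, 1)` and `y ∈ (0, 1)`, the binary relative entropy satisfies
`d(x, y) = x log(x/y) + (1 - x) log((1 - x)/(1 - y)) ≥ (1/2) log(1/(4y))`. -/
theorem stmt12 (x y : ℝ) (hx : x ∈ Set.Ico (1 / 2 : ℝ) 1) (hy : y ∈ Set.Ioo (0 : ℝ) 1) :
    (1 / 2) * Real.log (1 / (4 * y))
      ≤ x * Real.log (x / y) + (1 - x) * Real.log ((1 - x) / (1 - y)) := by
  obtain ⟨hx0, hx1⟩ := hx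
  obtain ⟨hy0, hy1⟩ := hy
  have hx0' : (0:ℝ) < x := by linarith
  have hx1' : (0:ℝ) < 1 - x := by linarith
  have hy1' : (0:ℝ) < 1 - y := by linarith
  rcases le_or_gt y (1/2) with hle | hgt
  · -- y ≤ 1/2
    -- rewrite everything in terms of log x, log y, log (1-x), log (1-y), log 2
    have erhs : Real.log (1 / (4 * y)) = -(2 * Real.log 2 + Real.log y) := by
      rw [one_div, Real.log_inv, Real.log_mul (by norm_num) hy0.ne',
        show (4:ℝ) = 2^2 by norm_num, Real.log_pow]
      push_cast; ring
    have e1 : Real.log (x / y) = Real.log x - Real.log y :=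
      Real.log_div hx0'.ne' hy0.ne'
    have e2 : Real.log ((1 - x) / (1 - y)) = Real.log (1 - x) - Real.log (1 - y) :=
      Real.log_div hx1'.ne' hy1'.ne'
    -- entropy bound from dnn with y = 1/2
    have hent := dnn x (1/2) hx0' hx1 (by norm_num) (by norm_num)
    have e3 : Real.log (x / (1/2)) = Real.log x + Real.log 2 := by
      rw [show x / (1/2) = 2 * x by ring, Real.log_mul (by norm_num) hx0'.ne']; ring
    have e4 : Real.log ((1 - x) / (1 - 1/2)) = Real.log (1 - x) + Real.log 2 := by
      rw [show (1 - x) / (1 - 1/2) = 2 * (1 - x) by ring,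
        Real.log_mul (by norm_num) hx1'.ne']; ring
    rw [e3, e4] at hent
    -- sign facts
    have hly : Real.log y ≤ 0 := Real.log_nonpos hy0.le (by linarith)
    have hl1y : Real.log (1 - y) ≤ 0 := Real.log_nonpos hy1'.le (by linarith)
    have hB : (x - 1/2) * Real.log y ≤ 0 :=
      mul_nonpos_of_nonneg_of_nonpos (by linarith) hly
    have hC : (1 - x) * Real.log (1 - y) ≤ 0 :=
      mul_nonpos_of_nonneg_of_nonpos hx1'.le hl1y
    rw [erhs, e1, e2]
    nlinarith [hent, hB, hC]
  · -- y > 1/2 : RHS ≤ 0 ≤ d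
    have hrhs : Real.log (1 / (4 * y)) ≤ 0 :=
      Real.log_nonpos (by positivity) (by rw [div_le_one (by linarith)]; linarith)
    have := dnn x y hx0' hx1 hy0 hy1
    nlinarith
end
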